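/- Let F(y) = ‖y‖ₒ² be the square of an absolute norm on ℝ^K with ∇F Lipschitz continuous with constant L with respect to ‖·‖ₒ, and let φᵢ(xᵢ) = ‖xᵢ‖ᵢ² be squares of norms on ℝ^{nᵢ} with ∇φᵢ Lipschitz with constant ℓ with respect to ‖·‖ᵢ. Set φ(x) = (φ₁(x₁),…,φ_K(x_K)) and f(x) = F(φ(x))^{1/2}. Then f is the square of a norm on ℝ^{n₁+…+n_K}, and ∇f is Lipschitz continuous with constant 2L + ℓ with respect to that norm (equivalently, f(x+h) ≤ f(x) + ⟨∇f(x), h⟩ + (1/2)(2L+ℓ)f(h) for all x, h). -/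

import Mathlib

open scoped RealInnerProductSpace
open Real Matrix

/-- `N` is a norm on the real vector space `E`. -/
def IsNorm {E : Type*} [AddCommGroup E] [Module ℝ E] (N : E → ℝ) : Prop :=
  (∀ x, 0 ≤ N x) ∧ (∀ x, N x = 0 ↔ x = 0) ∧
    (∀ (c : ℝ) (x), N (c • x) = |c| * N x) ∧ ∀ x y, N (x + y) ≤ N x + N y

/-- The conjugate (dual) norm of `N`: `‖y‖_* = sup {⟨y,x⟩ : N x ≤ 1}`. -/
noncomputable def dualNorm {E : Type*} [NormedAddCommGroup E] [InnerProductSpace ℝ E]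
    (N : E → ℝ) (y : E) : ℝ :=
  sSup {r | ∃ x, N x ≤ 1 ∧ r = ⟪y, x⟫}

/-- `N` is a `κ`-smooth norm: its square `Φ` is `C¹` and satisfies
`Φ(x+h) ≤ Φ(x) + ⟨∇Φ(x),h⟩ + κ Φ(h)`. -/
def IsSmoothNorm {E : Type*} [NormedAddCommGroup E] [InnerProductSpace ℝ E] [CompleteSpace E]
    (κ : ℝ) (N : E → ℝ) : Prop :=
  IsNorm N ∧ ContDiff ℝ 1 (fun x => N x ^ 2) ∧
    ∀ x h, N (x + h) ^ 2 ≤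
      N x ^ 2 + ⟪gradient (fun z => N z ^ 2) x, h⟫ + κ * N h ^ 2

/-- `N` is a `(κ,ς)`-regular norm: within factor `ς` of a `κ`-smooth norm. -/
def IsRegularNorm {E : Type*} [NormedAddCommGroup E] [InnerProductSpace ℝ E] [CompleteSpace E]
    (κ ς : ℝ) (N : E → ℝ) : Prop :=
  ∃ M : E → ℝ, IsSmoothNorm κ M ∧ ∀ x, ς⁻¹ * M x ≤ N x ∧ N x ≤ ς * M x

section General
variable {V : Type*} [NormedAddCommGroup V] [InnerProductSpace ℝ V] [FiniteDimensional ℝ V]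
  {N : V → ℝ}

lemma IsNorm.zero (hN : IsNorm N) : N 0 = 0 := (hN.2.1 0).mpr rfl

lemma IsNorm.sub_le (hN : IsNorm N) (a b : V) : N a - N b ≤ N (a - b) := by
  have h := hN.2.2.2 (a - b) b
  rw [sub_add_cancel] at h
  linarith

lemma IsNorm.neg (hN : IsNorm N) (a : V) : N (-a) = N a := by
  have h := hN.2.2.1 (-1) a
  simpa using h

lemma IsNorm.sum_le (hN : IsNorm N) {ι : Type*} (s : Finset ι) (g : ι → V) :
    N (∑ i ∈ s, g i) ≤ ∑ i ∈ s, N (g i) := by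
  classical
  induction s using Finset.induction_on with
  | empty => simp [hN.zero]
  | insert a s hx ih =>
    rw [Finset.sum_insert hx, Finset.sum_insert hx]
    exact le_trans (hN.2.2.2 _ _) (by linarith)

lemma IsNorm.exists_upper (hN : IsNorm N) : ∃ C : ℝ, 0 ≤ C ∧ ∀ x, N x ≤ C * ‖x‖ := by
  classical
  set b := stdOrthonormalBasis ℝ V
  refine ⟨∑ i, N (b i), Finset.sum_nonneg fun i _ => hN.1 _, fun x => ?_⟩
  have hx : x = ∑ i, b.repr x i • b i := (b.sum_repr x).symm
  calc N x = N (∑ i, b.repr x i • b i) := by rw [← hx]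
    _ ≤ ∑ i, N (b.repr x i • b i) := hN.sum_le _ _
    _ ≤ ∑ i, ‖x‖ * N (b i) := by
        refine Finset.sum_le_sum fun i _ => ?_
        rw [hN.2.2.1]
        refine mul_le_mul_of_nonneg_right ?_ (hN.1 _)
        rw [b.repr_apply_apply]
        exact (abs_real_inner_le_norm _ _).trans (by simp [b.orthonormal.1 i])
    _ = (∑ i, N (b i)) * ‖x‖ := by rw [Finset.sum_mul]; exact Finset.sum_congr rfl fun i _ => mul_comm _ _

lemma IsNorm.continuous (hN : IsNorm N) : Continuous N := by
  obtain ⟨C, hC0, hC⟩ := hN.exists_upper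
  refine (LipschitzWith.of_dist_le_mul (K := ⟨C, hC0⟩) fun a b => ?_).continuous
  have h1 : N a - N b ≤ N (a - b) := hN.sub_le a b
  have h2 : N b - N a ≤ N (a - b) := by
    have := hN.sub_le b a
    rwa [← hN.neg (b - a), neg_sub] at this
  have h3 : |N a - N b| ≤ N (a - b) := abs_le.mpr ⟨by linarith, h1⟩
  calc dist (N a) (N b) = |N a - N b| := Real.dist_eq _ _
    _ ≤ N (a - b) := h3
    _ ≤ C * ‖a - b‖ := hC _
    _ = C * dist a b := by rw [dist_eq_norm]

lemma IsNorm.exists_lower (hN : IsNorm N) [Nontrivial V] :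
    ∃ c : ℝ, 0 < c ∧ ∀ x, c * ‖x‖ ≤ N x := by
  have hsph : (Metric.sphere (0:V) 1).Nonempty := NormedSpace.sphere_nonempty.mpr zero_le_one
  obtain ⟨y, hy, hmin'⟩ := (isCompact_sphere (0:V) 1).exists_isMinOn hsph
    hN.continuous.continuousOn
  have hmin : ∀ z ∈ Metric.sphere (0:V) 1, N y ≤ N z := fun z hz => hmin' hz
  have hy1 : ‖y‖ = 1 := mem_sphere_zero_iff_norm.mp hy
  have hy0 : y ≠ 0 := by intro h; rw [h] at hy1; simp at hy1
  have hc : 0 < N y := lt_of_le_of_ne (hN.1 y) (fun h => hy0 ((hN.2.1 y).mp h.symm))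
  refine ⟨N y, hc, fun x => ?_⟩
  rcases eq_or_ne x 0 with rfl | hx
  · simp [hN.zero]
  · have hxn : (0:ℝ) < ‖x‖ := norm_pos_iff.mpr hx
    have hu : ‖x‖⁻¹ • x ∈ Metric.sphere (0:V) 1 := by
      simp [norm_smul, abs_of_pos (inv_pos.mpr hxn), inv_mul_cancel₀ hxn.ne']
    have := hmin _ hu
    have hNx : N (‖x‖⁻¹ • x) = ‖x‖⁻¹ * N x := by
      rw [hN.2.2.1, abs_of_pos (inv_pos.mpr hxn)]
    rw [hNx] at this
    calc N y * ‖x‖ ≤ (‖x‖⁻¹ * N x) * ‖x‖ := by nlinarith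
      _ = N x := by field_simp

lemma IsNorm.pairing (hN : IsNorm N) (u z : V) : ⟪u, z⟫ ≤ dualNorm N u * N z := by
  rcases eq_or_ne z 0 with rfl | hz
  · simp [hN.zero]
  · have : Nontrivial V := ⟨⟨z, 0, hz⟩⟩
    obtain ⟨c, hc0, hc⟩ := hN.exists_lower
    have hNz : 0 < N z := lt_of_le_of_ne (hN.1 z) (fun h => hz ((hN.2.1 z).mp h.symm))
    have hbdd : BddAbove {r | ∃ x, N x ≤ 1 ∧ r = ⟪u, x⟫} := by
      refine ⟨‖u‖ * c⁻¹, fun r hr => ?_⟩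
      obtain ⟨x, hx1, rfl⟩ := hr
      have hxn : ‖x‖ ≤ c⁻¹ := by
        have h1 : c * ‖x‖ ≤ 1 := (hc x).trans hx1
        have h2 : c * c⁻¹ = 1 := mul_inv_cancel₀ hc0.ne'
        nlinarith [inv_pos.mpr hc0]
      calc ⟪u, x⟫ ≤ ‖u‖ * ‖x‖ := real_inner_le_norm u x
        _ ≤ ‖u‖ * c⁻¹ := mul_le_mul_of_nonneg_left hxn (norm_nonneg u)
    have hmem : ⟪u, (N z)⁻¹ • z⟫ ∈ {r | ∃ x, N x ≤ 1 ∧ r = ⟪u, x⟫} := by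
      refine ⟨(N z)⁻¹ • z, ?_, rfl⟩
      rw [hN.2.2.1, abs_of_pos (inv_pos.mpr hNz), inv_mul_cancel₀ hNz.ne']
    have hle := le_csSup hbdd hmem
    rw [real_inner_smul_right] at hle
    calc ⟪u, z⟫ = N z * ((N z)⁻¹ * ⟪u, z⟫) := by field_simp
      _ ≤ N z * dualNorm N u := mul_le_mul_of_nonneg_left hle hNz.le
      _ = dualNorm N u * N z := mul_comm _ _

end General

section Calc
variable {V : Type*} [NormedAddCommGroup V] [InnerProductSpace ℝ V] [FiniteDimensional ℝ V]
  {N : V → ℝ} {Φ : V → ℝ}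

lemma line_hasDerivAt {g : V} {x u : V} {t : ℝ} (hg : HasGradientAt Φ g (x + t • u)) :
    HasDerivAt (fun s : ℝ => Φ (x + s • u)) ⟪g, u⟫ t := by
  have hline : HasDerivAt (fun s : ℝ => x + s • u) u t := by
    simpa using ((hasDerivAt_id t).smul_const u).const_add x
  have := hg.hasFDerivAt.comp_hasDerivAt t hline
  simpa [InnerProductSpace.toDual_apply_apply, Function.comp_def] using this

/-- gradient pairing bound: `⟪g,u⟫ ≤ 2 N x N u` when `Φ = N²`. -/
lemma grad_pair_le (hN : IsNorm N) (hΦ : ∀ y, Φ y = N y ^ 2) {g x : V}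
    (hg : HasGradientAt Φ g x) (u : V) : ⟪g, u⟫ ≤ 2 * N x * N u := by
  have hd : HasDerivAt (fun s : ℝ => Φ (x + s • u)) ⟪g, u⟫ 0 :=
    line_hasDerivAt (by simpa using hg)
  have hslope := hasDerivAt_iff_tendsto_slope.mp hd
  have hslope' : Filter.Tendsto (slope (fun s : ℝ => Φ (x + s • u)) 0) (nhdsWithin 0 (Set.Ioi 0))
      (nhds ⟪g, u⟫) := hslope.mono_left (nhdsWithin_mono 0 (fun t ht => ne_of_gt ht))
  have hbound : Filter.Tendsto (fun t : ℝ => 2 * N x * N u + t * N u ^ 2)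
      (nhdsWithin 0 (Set.Ioi 0)) (nhds (2 * N x * N u)) := by
    have : Filter.Tendsto (fun t : ℝ => 2 * N x * N u + t * N u ^ 2) (nhds 0)
        (nhds (2 * N x * N u + 0 * N u ^ 2)) := by
      exact (Filter.tendsto_id.mul_const _).const_add _
    simpa using this.mono_left nhdsWithin_le_nhds
  refine le_of_tendsto_of_tendsto hslope' hbound ?_
  filter_upwards [self_mem_nhdsWithin] with t ht
  have ht0 : (0:ℝ) < t := ht
  have h1 : N (x + t • u) ≤ N x + t * N u := by
    have := hN.2.2.2 x (t • u)
    rw [hN.2.2.1, abs_of_pos ht0] at this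
    exact this
  have h2 : Φ (x + t • u) ≤ (N x + t * N u) ^ 2 := by
    rw [hΦ]
    exact pow_le_pow_left₀ (hN.1 _) h1 2
  have h3 : Φ (x + (0:ℝ) • u) = N x ^ 2 := by rw [hΦ]; simp
  rw [slope_def_field]
  simp only [sub_zero, zero_smul, add_zero]
  rw [div_le_iff₀ ht0]
  simp only [zero_smul, add_zero] at h3
  nlinarith [hN.1 x, hN.1 u]

lemma grad_sq_zero (hN : IsNorm N) (hΦ : ∀ y, Φ y = N y ^ 2) {g : V}
    (hg : HasGradientAt Φ g 0) : g = 0 := by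
  have h1 := grad_pair_le hN hΦ hg g
  have h2 := grad_pair_le hN hΦ hg (-g)
  rw [hN.zero] at h1 h2
  simp only [mul_zero, zero_mul] at h1 h2
  rw [inner_neg_right] at h2
  have : ⟪g, g⟫ = 0 := le_antisymm h1 (by linarith)
  exact inner_self_eq_zero.mp this

lemma grad_sq_euler (hN : IsNorm N) (hΦ : ∀ y, Φ y = N y ^ 2) {g y : V}
    (hg : HasGradientAt Φ g y) : ⟪g, y⟫ = 2 * N y ^ 2 := by
  have hd : HasDerivAt (fun s : ℝ => Φ ((0:V) + s • y)) ⟪g, y⟫ 1 :=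
    line_hasDerivAt (by simpa using hg)
  have heq : (fun s : ℝ => Φ ((0:V) + s • y)) = fun s : ℝ => N y ^ 2 * s ^ 2 := by
    funext s
    rw [zero_add, hΦ, hN.2.2.1, mul_pow, sq_abs, mul_comm]
  rw [heq] at hd
  have hd2 : HasDerivAt (fun s : ℝ => N y ^ 2 * s ^ 2) (N y ^ 2 * 2) 1 := by
    simpa using (hasDerivAt_pow 2 (1:ℝ)).const_mul (N y ^ 2)
  have := hd.unique hd2
  rw [this]; ring

/-- Descent lemma. -/
lemma descent_lemma (hN : IsNorm N) {g : V → V} (hg : ∀ y, HasGradientAt Φ (g y) y)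
    {C : ℝ} (hC : 0 ≤ C) (hlip : ∀ y y', dualNorm N (g y - g y') ≤ C * N (y - y'))
    (x k : V) : Φ (x + k) ≤ Φ x + ⟪g x, k⟫ + C / 2 * N k ^ 2 := by
  set θ : ℝ → ℝ := fun t => Φ (x + t • k) - t * ⟪g x, k⟫ - C / 2 * t ^ 2 * N k ^ 2 with hθdef
  have hθ : ∀ t : ℝ, HasDerivAt θ (⟪g (x + t • k) - g x, k⟫ - C * t * N k ^ 2) t := by
    intro t
    have h1 : HasDerivAt (fun s : ℝ => Φ (x + s • k)) ⟪g (x + t • k), k⟫ t :=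
      line_hasDerivAt (hg _)
    have h2 : HasDerivAt (fun s : ℝ => s * ⟪g x, k⟫) ⟪g x, k⟫ t := by
      simpa using (hasDerivAt_id t).mul_const ⟪g x, k⟫
    have h3 : HasDerivAt (fun s : ℝ => C / 2 * s ^ 2 * N k ^ 2) (C * t * N k ^ 2) t := by
      have := ((hasDerivAt_pow 2 t).const_mul (C / 2)).mul_const (N k ^ 2)
      refine this.congr_deriv ?_
      ring
    have heq : ⟪g (x + t • k) - g x, k⟫ - C * t * N k ^ 2
        = ⟪g (x + t • k), k⟫ - ⟪g x, k⟫ - C * t * N k ^ 2 := by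
      rw [inner_sub_left]
    rw [heq]
    exact (h1.sub h2).sub h3
  have hanti : ∀ t ∈ Set.Icc (0:ℝ) 1, ∀ t' ∈ Set.Icc (0:ℝ) 1, t ≤ t' → θ t' ≤ θ t := by
    have := antitoneOn_of_deriv_nonpos (convex_Icc (0:ℝ) 1)
      (fun t _ => (hθ t).continuousAt.continuousWithinAt)
      (fun t _ => (hθ t).differentiableAt.differentiableWithinAt)
      (fun t ht => ?_)
    · exact fun t ht t' ht' htt' => this ht ht' htt'
    · rw [(hθ t).deriv]
      rw [interior_Icc] at ht
      have ht0 : 0 ≤ t := le_of_lt ht.1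
      have hpair : ⟪g (x + t • k) - g x, k⟫ ≤ dualNorm N (g (x + t • k) - g x) * N k :=
        hN.pairing _ _
      have hlip' : dualNorm N (g (x + t • k) - g x) ≤ C * (t * N k) := by
        have := hlip (x + t • k) x
        rwa [add_sub_cancel_left, hN.2.2.1, abs_of_nonneg ht0] at this
      have hNk : 0 ≤ N k := hN.1 k
      nlinarith
  have h01 := hanti 0 ⟨le_refl 0, zero_le_one⟩ 1 ⟨zero_le_one, le_refl 1⟩ zero_le_one
  have e1 : θ 1 = Φ (x + k) - ⟪g x, k⟫ - C / 2 * N k ^ 2 := by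
    simp [hθdef]
  have e0 : θ 0 = Φ x := by simp [hθdef]
  rw [e1, e0] at h01
  linarith

end Calc

section Abs
variable {m : ℕ} {N : EuclideanSpace ℝ (Fin m) → ℝ}

lemma am_gm {a b : ℝ} (ha : 0 ≤ a) (hb : 0 ≤ b) : Real.sqrt (a * b) ≤ (a + b) / 2 := by
  rw [Real.sqrt_mul ha]
  nlinarith [Real.sq_sqrt ha, Real.sq_sqrt hb, sq_nonneg (Real.sqrt a - Real.sqrt b),
    Real.sqrt_nonneg a, Real.sqrt_nonneg b]

lemma absnorm_update_le (hN : IsNorm N) (habs : ∀ t, N t = N (WithLp.toLp 2 fun i => |t i|))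
    (z : EuclideanSpace ℝ (Fin m)) (i : Fin m) {a b : ℝ} (hab : |a| ≤ |b|) :
    N (WithLp.toLp 2 (Function.update z i a)) ≤ N (WithLp.toLp 2 (Function.update z i b)) := by
  have heven : N (WithLp.toLp 2 (Function.update z i (-b))) = N (WithLp.toLp 2 (Function.update z i b)) := by
    rw [habs (WithLp.toLp 2 (Function.update z i (-b))), habs (WithLp.toLp 2 (Function.update z i b))]
    congr 2
    funext j
    rcases eq_or_ne j i with rfl | hj
    · simp
    · simp [Function.update_of_ne hj]
  rcases eq_or_ne b 0 with rfl | hb0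
  · have : a = 0 := by simpa using hab
    rw [this]
  · set θ : ℝ := (a / b + 1) / 2 with hθdef
    have hθ0 : 0 ≤ θ := by
      have : |a / b| ≤ 1 := by
        rw [abs_div]
        rw [div_le_one (abs_pos.mpr hb0)]
        exact hab
      have := abs_le.mp this
      simp only [hθdef]
      linarith [this.1]
    have hθ1 : θ ≤ 1 := by
      have : |a / b| ≤ 1 := by
        rw [abs_div, div_le_one (abs_pos.mpr hb0)]
        exact hab
      have := abs_le.mp this
      simp only [hθdef]
      linarith [this.2]
    have hdecomp : WithLp.toLp 2 (Function.update z i a)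
        = θ • WithLp.toLp 2 (Function.update z i b) + (1 - θ) • WithLp.toLp 2 (Function.update z i (-b)) := by
      ext j
      rcases eq_or_ne j i with rfl | hj
      · simp only [PiLp.add_apply, PiLp.smul_apply, PiLp.toLp_apply, Pi.add_apply, Pi.smul_apply,
          Function.update_self, smul_eq_mul]
        rw [hθdef]; field_simp; ring
      · simp only [PiLp.add_apply, PiLp.smul_apply, PiLp.toLp_apply, Pi.add_apply, Pi.smul_apply,
          Function.update_of_ne hj, smul_eq_mul]
        ring
    calc N (WithLp.toLp 2 (Function.update z i a))
        = N (θ • WithLp.toLp 2 (Function.update z i b) + (1 - θ) • WithLp.toLp 2 (Function.update z i (-b))) := by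
          rw [hdecomp]
      _ ≤ N (θ • WithLp.toLp 2 (Function.update z i b)) + N ((1 - θ) • WithLp.toLp 2 (Function.update z i (-b))) :=
          hN.2.2.2 _ _
      _ = θ * N (WithLp.toLp 2 (Function.update z i b)) + (1 - θ) * N (WithLp.toLp 2 (Function.update z i (-b))) := by
          rw [hN.2.2.1, hN.2.2.1, abs_of_nonneg hθ0, abs_of_nonneg (by linarith)]
      _ = N (WithLp.toLp 2 (Function.update z i b)) := by rw [heven]; ring

lemma absnorm_mono (hN : IsNorm N) (habs : ∀ t, N t = N (WithLp.toLp 2 fun i => |t i|))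
    {u w : EuclideanSpace ℝ (Fin m)} (h : ∀ i, |u i| ≤ |w i|) : N u ≤ N w := by
  classical
  have key : ∀ s : Finset (Fin m),
      N (WithLp.toLp 2 (fun j => if j ∈ s then u j else w j) : EuclideanSpace ℝ (Fin m)) ≤ N w := by
    intro s
    induction s using Finset.induction_on with
    | empty => simp
    | @insert i s hi ih =>
      set old : EuclideanSpace ℝ (Fin m) := WithLp.toLp 2 (fun j => if j ∈ s then u j else w j) with holddef
      have hnew : (WithLp.toLp 2 (fun j => if j ∈ insert i s then u j else w j) : EuclideanSpace ℝ (Fin m))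
          = WithLp.toLp 2 (Function.update old i (u i)) := by
        ext j
        rcases eq_or_ne j i with rfl | hj
        · simp
        · simp [Function.update_of_ne hj, Finset.mem_insert, hj, holddef]
      have hold : WithLp.toLp 2 (Function.update old i (w i)) = old := by
        ext j
        rcases eq_or_ne j i with rfl | hj
        · simp [holddef, hi]
        · simp [Function.update_of_ne hj]
      rw [hnew]
      calc N (WithLp.toLp 2 (Function.update old i (u i))) ≤ N (WithLp.toLp 2 (Function.update old i (w i))) :=
            absnorm_update_le hN habs old i (h i)
        _ = N old := by rw [hold]
        _ ≤ N w := ih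
  have := key Finset.univ
  simpa using this

lemma absnorm_cs (hN : IsNorm N) (habs : ∀ t, N t = N (WithLp.toLp 2 fun i => |t i|))
    {u w : EuclideanSpace ℝ (Fin m)} (hu : ∀ i, 0 ≤ u i) (hw : ∀ i, 0 ≤ w i) :
    N (WithLp.toLp 2 (fun i => Real.sqrt (u i * w i)) : EuclideanSpace ℝ (Fin m))
      ≤ Real.sqrt (N u * N w) := by
  rcases eq_or_lt_of_le (hN.1 u) with hu0 | hupos
  · have : u = 0 := (hN.2.1 u).mp hu0.symm
    have hz : (WithLp.toLp 2 (fun i => Real.sqrt (u i * w i)) : EuclideanSpace ℝ (Fin m)) = 0 := by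
      ext i
      have : u i = 0 := by simp [this]
      simp [this]
    rw [hz, hN.zero]
    exact Real.sqrt_nonneg _
  rcases eq_or_lt_of_le (hN.1 w) with hw0 | hwpos
  · have : w = 0 := (hN.2.1 w).mp hw0.symm
    have hz : (WithLp.toLp 2 (fun i => Real.sqrt (u i * w i)) : EuclideanSpace ℝ (Fin m)) = 0 := by
      ext i
      have : w i = 0 := by simp [this]
      simp [this]
    rw [hz, hN.zero]
    exact Real.sqrt_nonneg _
  · set s1 := Real.sqrt (N u) with hs1
    set s2 := Real.sqrt (N w) with hs2
    have hs1p : 0 < s1 := Real.sqrt_pos.mpr hupos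
    have hs2p : 0 < s2 := Real.sqrt_pos.mpr hwpos
    set t : ℝ := s2 / s1 with ht
    have htp : 0 < t := div_pos hs2p hs1p
    have hpt : ∀ i, |Real.sqrt (u i * w i)| ≤ |(2⁻¹ * t) * u i + (2⁻¹ * t⁻¹) * w i| := by
      intro i
      have h1 : Real.sqrt (u i * w i) = Real.sqrt ((t * u i) * (t⁻¹ * w i)) := by
        congr 1
        field_simp
      have h2 : Real.sqrt ((t * u i) * (t⁻¹ * w i)) ≤ (t * u i + t⁻¹ * w i) / 2 :=
        am_gm (mul_nonneg htp.le (hu i)) (mul_nonneg (inv_pos.mpr htp).le (hw i))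
      have h3 : (t * u i + t⁻¹ * w i) / 2 = (2⁻¹ * t) * u i + (2⁻¹ * t⁻¹) * w i := by ring
      rw [abs_of_nonneg (Real.sqrt_nonneg _), h1]
      exact (h2.trans_eq h3).trans (le_abs_self _)
    have hmono := absnorm_mono hN habs (u := WithLp.toLp 2 (fun i => Real.sqrt (u i * w i)))
      (w := ((2⁻¹ * t) • u + (2⁻¹ * t⁻¹) • w)) (by
        intro i
        simpa [PiLp.add_apply, PiLp.smul_apply, Pi.add_apply, Pi.smul_apply,
          smul_eq_mul] using hpt i)
    refine hmono.trans ?_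
    have htri : N ((2⁻¹ * t) • u + (2⁻¹ * t⁻¹) • w)
        ≤ (2⁻¹ * t) * N u + (2⁻¹ * t⁻¹) * N w := by
      refine (hN.2.2.2 _ _).trans ?_
      rw [hN.2.2.1, hN.2.2.1, abs_of_pos (by positivity), abs_of_pos (by positivity)]
    refine htri.trans ?_
    have hNu : N u = s1 ^ 2 := (Real.sq_sqrt (hN.1 u)).symm
    have hNw : N w = s2 ^ 2 := (Real.sq_sqrt (hN.1 w)).symm
    have hsqrt : Real.sqrt (N u * N w) = s1 * s2 := by
      rw [Real.sqrt_mul (hN.1 u), ← hs1, ← hs2]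
    rw [hsqrt, hNu, hNw]
    refine le_of_eq ?_
    rw [ht]
    field_simp
    ring

set_option maxHeartbeats 1000000 in
/-- if `F` is the square of an absolute norm with `L`-Lipschitz
gradient and `φᵢ` are squares of norms with `ℓ`-Lipschitz gradients, then
`f(x) = F(φ₁(x₁),…,φ_K(x_K))^{1/2}` is the square of a norm whose gradient is
Lipschitz with constant `2L + ℓ` w.r.t. that norm, equivalently
`f(x+h) ≤ f(x) + ⟨∇f(x),h⟩ + ½(2L+ℓ)f(h)`. -/
theorem stmt_15 {K : ℕ} (n : Fin K → ℕ)
    (No : EuclideanSpace ℝ (Fin K) → ℝ) (hNo : IsNorm No)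
    (hNoabs : ∀ t : EuclideanSpace ℝ (Fin K), No t = No (WithLp.toLp 2 (fun i => |t i|)))
    (L ℓ : ℝ) (hL : 0 ≤ L) (hℓ : 0 ≤ ℓ)
    (F : EuclideanSpace ℝ (Fin K) → ℝ) (hF : ∀ y, F y = No y ^ 2)
    (gF : EuclideanSpace ℝ (Fin K) → EuclideanSpace ℝ (Fin K))
    (hgF : ∀ y, HasGradientAt F (gF y) y)
    (hgFlip : ∀ y y', dualNorm No (gF y - gF y') ≤ L * No (y - y'))
    (Ni : ∀ i, EuclideanSpace ℝ (Fin (n i)) → ℝ) (hNi : ∀ i, IsNorm (Ni i))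
    (φ : ∀ i, EuclideanSpace ℝ (Fin (n i)) → ℝ)
    (hφ : ∀ i x, φ i x = Ni i x ^ 2)
    (gφ : ∀ i, EuclideanSpace ℝ (Fin (n i)) → EuclideanSpace ℝ (Fin (n i)))
    (hgφ : ∀ i x, HasGradientAt (φ i) (gφ i x) x)
    (hgφlip : ∀ i x x', dualNorm (Ni i) (gφ i x - gφ i x') ≤ ℓ * Ni i (x - x'))
    (f : PiLp 2 (fun i => EuclideanSpace ℝ (Fin (n i))) → ℝ)
    (hf : ∀ x, f x = Real.sqrt (F (WithLp.toLp 2 (fun i => φ i (x i))))) :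
    (∃ M : PiLp 2 (fun i => EuclideanSpace ℝ (Fin (n i))) → ℝ,
      IsNorm M ∧ ∀ x, f x = M x ^ 2) ∧
    ∃ gf : PiLp 2 (fun i => EuclideanSpace ℝ (Fin (n i))) →
        PiLp 2 (fun i => EuclideanSpace ℝ (Fin (n i))),
      (∀ x, HasGradientAt f (gf x) x) ∧
        ∀ x h, f (x + h) ≤ f x + ⟪gf x, h⟫ + 1 / 2 * (2 * L + ℓ) * f h := by
  classical
  set v : (PiLp 2 fun i => EuclideanSpace ℝ (Fin (n i))) → EuclideanSpace ℝ (Fin K) := fun x => WithLp.toLp 2 (fun i => φ i (x i)) with hv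
  -- basic facts
  have hvnn : ∀ (x : (PiLp 2 fun i => EuclideanSpace ℝ (Fin (n i)))) (i : Fin K), 0 ≤ v x i := by
    intro x i; rw [hv]; simp only; rw [hφ]; positivity
  have hfeq : ∀ x : (PiLp 2 fun i => EuclideanSpace ℝ (Fin (n i))), f x = No (v x) := by
    intro x
    rw [hf x, hF]
    exact Real.sqrt_sq (hNo.1 _)
  have hfnn : ∀ x : (PiLp 2 fun i => EuclideanSpace ℝ (Fin (n i))), 0 ≤ f x := fun x => (hfeq x).symm ▸ hNo.1 _
  have hv0 : v 0 = 0 := by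
    ext i
    simp only [hv, PiLp.toLp_apply]
    have : (0 : (PiLp 2 fun i => EuclideanSpace ℝ (Fin (n i)))) i = 0 := rfl
    rw [this, hφ, (hNi i).zero]
    norm_num
  have hf0 : f 0 = 0 := by rw [hfeq, hv0, hNo.zero]
  have hvx0 : ∀ x : (PiLp 2 fun i => EuclideanSpace ℝ (Fin (n i))), No (v x) = 0 → x = 0 := by
    intro x hx
    have hvz : v x = 0 := (hNo.2.1 _).mp hx
    ext1 i
    have : φ i (x i) = 0 := congrArg (fun w : EuclideanSpace ℝ (Fin K) => w i) hvz
    rw [hφ] at this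
    have : Ni i (x i) = 0 := by
      have := sq_eq_zero_iff.mp this
      exact this
    exact ((hNi i).2.1 _).mp this
  -- block-wise gradient pairing bound
  have hblock : ∀ (i : Fin K) (y u : EuclideanSpace ℝ (Fin (n i))),
      |(⟪gφ i y, u⟫ : ℝ)| ≤ 2 * Real.sqrt (φ i y * φ i u) := by
    intro i y u
    have h1 := grad_pair_le (hNi i) (hφ i) (hgφ i y) u
    have h2 := grad_pair_le (hNi i) (hφ i) (hgφ i y) (-u)
    rw [inner_neg_right] at h2
    have hneg : Ni i (-u) = Ni i u := (hNi i).neg u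
    rw [hneg] at h2
    have hsq : 2 * Ni i y * Ni i u = 2 * Real.sqrt (φ i y * φ i u) := by
      rw [hφ, hφ, Real.sqrt_mul (sq_nonneg _), Real.sqrt_sq ((hNi i).1 _),
        Real.sqrt_sq ((hNi i).1 _)]
      ring
    rw [hsq] at h1 h2
    exact abs_le.mpr ⟨by linarith, h1⟩
  -- first conjunct: the norm M
  set Mn : (PiLp 2 fun i => EuclideanSpace ℝ (Fin (n i))) → ℝ := fun x => Real.sqrt (No (v x)) with hMn
  have hMsq : ∀ x : (PiLp 2 fun i => EuclideanSpace ℝ (Fin (n i))), f x = Mn x ^ 2 := by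
    intro x
    rw [hfeq, hMn]
    exact (Real.sq_sqrt (hNo.1 _)).symm
  have hvsmul : ∀ (c : ℝ) (x : (PiLp 2 fun i => EuclideanSpace ℝ (Fin (n i)))), v (c • x) = (c ^ 2) • v x := by
    intro c x
    ext i
    simp only [hv, PiLp.toLp_apply, PiLp.smul_apply, Pi.smul_apply, smul_eq_mul]
    rw [hφ, hφ, (hNi i).2.2.1, mul_pow, sq_abs]
  have hMnorm : IsNorm Mn := by
    refine ⟨fun x => Real.sqrt_nonneg _, ?_, ?_, ?_⟩
    · intro x
      constructor
      · intro hx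
        have : No (v x) = 0 := by
          have := Real.sqrt_eq_zero (hNo.1 (v x)) |>.mp hx
          exact this
        exact hvx0 x this
      · intro hx; rw [hx, hMn]; simp only
        rw [hv0, hNo.zero, Real.sqrt_zero]
    · intro c x
      rw [hMn]
      simp only
      rw [hvsmul, hNo.2.2.1, abs_of_nonneg (sq_nonneg c), Real.sqrt_mul (sq_nonneg c),
        Real.sqrt_sq_eq_abs]
    · intro x y
      rw [hMn]
      simp only
      set svec : EuclideanSpace ℝ (Fin K) := WithLp.toLp 2 (fun i => Real.sqrt (v x i * v y i)) with hsvec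
      have hpt : ∀ i, |v (x + y) i| ≤ |(v x + (2:ℝ) • svec + v y) i| := by
        intro i
        have hadd : (x + y) i = x i + y i := rfl
        have h1 : v (x + y) i = φ i (x i + y i) := by rw [hv]; simp only [hadd]
        have htri : Ni i (x i + y i) ≤ Ni i (x i) + Ni i (y i) := (hNi i).2.2.2 _ _
        have hsq : φ i (x i + y i) ≤ v x i + 2 * Real.sqrt (v x i * v y i) + v y i := by
          rw [hφ]
          have e1 : v x i = Ni i (x i) ^ 2 := by rw [hv]; simp only; rw [hφ]
          have e2 : v y i = Ni i (y i) ^ 2 := by rw [hv]; simp only; rw [hφ]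
          have e3 : Real.sqrt (v x i * v y i) = Ni i (x i) * Ni i (y i) := by
            rw [e1, e2, Real.sqrt_mul (sq_nonneg _), Real.sqrt_sq ((hNi i).1 _),
              Real.sqrt_sq ((hNi i).1 _)]
          rw [e3, e1, e2]
          nlinarith [(hNi i).1 (x i), (hNi i).1 (y i), (hNi i).1 (x i + y i)]
        have hcomp : (v x + (2:ℝ) • svec + v y) i
            = v x i + 2 * Real.sqrt (v x i * v y i) + v y i := by
          simp only [PiLp.add_apply, PiLp.smul_apply, Pi.add_apply, Pi.smul_apply,
            smul_eq_mul, hsvec, PiLp.toLp_apply]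
        rw [h1, hcomp, abs_of_nonneg (by rw [hφ]; positivity),
          abs_of_nonneg (by nlinarith [hvnn x i, hvnn y i,
            Real.sqrt_nonneg (v x i * v y i)])]
        exact hsq
      have hmono := absnorm_mono hNo hNoabs hpt
      have htri2 : No (v x + (2:ℝ) • svec + v y) ≤ No (v x) + 2 * No svec + No (v y) := by
        have t1 := hNo.2.2.2 (v x + (2:ℝ) • svec) (v y)
        have t2 := hNo.2.2.2 (v x) ((2:ℝ) • svec)
        have t3 : No ((2:ℝ) • svec) = 2 * No svec := by
          rw [hNo.2.2.1]; norm_num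
        linarith
      have hcs := absnorm_cs hNo hNoabs (fun i => hvnn x i) (fun i => hvnn y i)
      have hcs' : No svec ≤ Real.sqrt (No (v x) * No (v y)) := hcs
      have hfin : No (v (x + y)) ≤ (Real.sqrt (No (v x)) + Real.sqrt (No (v y))) ^ 2 := by
        have hs1 : Real.sqrt (No (v x)) ^ 2 = No (v x) := Real.sq_sqrt (hNo.1 _)
        have hs2 : Real.sqrt (No (v y)) ^ 2 = No (v y) := Real.sq_sqrt (hNo.1 _)
        have hs3 : Real.sqrt (No (v x) * No (v y))
            = Real.sqrt (No (v x)) * Real.sqrt (No (v y)) := Real.sqrt_mul (hNo.1 _) _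
        nlinarith [Real.sqrt_nonneg (No (v x)), Real.sqrt_nonneg (No (v y))]
      calc Real.sqrt (No (v (x + y)))
          ≤ Real.sqrt ((Real.sqrt (No (v x)) + Real.sqrt (No (v y))) ^ 2) :=
            Real.sqrt_le_sqrt hfin
        _ = Real.sqrt (No (v x)) + Real.sqrt (No (v y)) :=
            Real.sqrt_sq (by positivity)
  refine ⟨⟨Mn, hMnorm, hMsq⟩, ?_⟩
  -- gradients
  have hgF0 : gF 0 = 0 := grad_sq_zero hNo hF (hgF 0)
  set gg : (PiLp 2 fun i => EuclideanSpace ℝ (Fin (n i))) → (PiLp 2 fun i => EuclideanSpace ℝ (Fin (n i))) := fun x => WithLp.toLp 2 (fun i => gF (v x) i • gφ i (x i)) with hgg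
  have hinner : ∀ x h : (PiLp 2 fun i => EuclideanSpace ℝ (Fin (n i))), (⟪gg x, h⟫ : ℝ) = ⟪gF (v x), (WithLp.toLp 2 (fun i => ⟪gφ i (x i), h i⟫) : EuclideanSpace ℝ (Fin K))⟫ := by
    intro x h
    rw [PiLp.inner_apply, PiLp.inner_apply]
    refine Finset.sum_congr rfl fun i _ => ?_
    simp only [hgg, PiLp.toLp_apply, RCLike.inner_apply, conj_trivial]
    rw [real_inner_smul_left, mul_comm]
  have hggrad : ∀ x : (PiLp 2 fun i => EuclideanSpace ℝ (Fin (n i))), HasGradientAt (fun y : (PiLp 2 fun i => EuclideanSpace ℝ (Fin (n i))) => F (v y)) (gg x) x := by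
    intro x
    set Dv : (PiLp 2 fun i => EuclideanSpace ℝ (Fin (n i))) →L[ℝ] EuclideanSpace ℝ (Fin K) :=
      (PiLp.continuousLinearEquiv 2 ℝ (fun _ : Fin K => ℝ)).symm.toContinuousLinearMap.comp
        (ContinuousLinearMap.pi fun i =>
          (innerSL ℝ (gφ i (x i))).comp
            (PiLp.proj (𝕜 := ℝ) 2 (fun i => EuclideanSpace ℝ (Fin (n i))) i)) with hDv
    have hDvapp : ∀ (h : PiLp 2 fun i => EuclideanSpace ℝ (Fin (n i))) (i : Fin K),
        Dv h i = ⟪gφ i (x i), h i⟫ := fun h i => rfl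
    have hvd : HasFDerivAt v Dv x := by
      rw [← hasFDerivWithinAt_univ, hasFDerivWithinAt_piLp 2]
      intro i
      have hproj := (PiLp.proj (𝕜 := ℝ) 2 (fun i => EuclideanSpace ℝ (Fin (n i))) i).hasFDerivAt (x := x)
      have hcomp := ((hgφ i (x i)).hasFDerivAt.comp x hproj)
      have heq : (PiLp.proj (𝕜 := ℝ) 2 (fun _ : Fin K => ℝ) i).comp Dv
          = (InnerProductSpace.toDual ℝ _ (gφ i (x i))).comp
              (PiLp.proj (𝕜 := ℝ) 2 (fun i => EuclideanSpace ℝ (Fin (n i))) i) := by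
        apply ContinuousLinearMap.ext
        intro h
        rfl
      rw [heq]
      exact hcomp.hasFDerivWithinAt
    have hcomp := ((hgF (v x)).hasFDerivAt.comp x hvd)
    have heq : (InnerProductSpace.toDual ℝ (EuclideanSpace ℝ (Fin K)) (gF (v x))).comp Dv
        = InnerProductSpace.toDual ℝ (PiLp 2 fun i => EuclideanSpace ℝ (Fin (n i))) (gg x) := by
      apply ContinuousLinearMap.ext
      intro h
      have lhs : ((InnerProductSpace.toDual ℝ (EuclideanSpace ℝ (Fin K)) (gF (v x))).comp Dv) h
          = ⟪gF (v x), Dv h⟫ := rfl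
      have rhs : (InnerProductSpace.toDual ℝ (PiLp 2 fun i => EuclideanSpace ℝ (Fin (n i))) (gg x)) h
          = ⟪gg x, h⟫ := rfl
      rw [lhs, rhs, hinner x h]
      have hDvfun : Dv h = (WithLp.toLp 2 (fun i => ⟪gφ i (x i), h i⟫) : EuclideanSpace ℝ (Fin K)) := by
        ext i; exact hDvapp h i
      rw [hDvfun]
    rw [heq] at hcomp
    exact hasGradientAt_iff_hasFDerivAt.mpr hcomp
  have hgg0 : gg 0 = 0 := by
    ext1 i
    simp only [hgg, PiLp.toLp_apply]
    rw [hv0, hgF0]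
    have : (0 : EuclideanSpace ℝ (Fin K)) i = 0 := rfl
    rw [this, zero_smul]
    rfl
  set gf : (PiLp 2 fun i => EuclideanSpace ℝ (Fin (n i))) → (PiLp 2 fun i => EuclideanSpace ℝ (Fin (n i))) := fun x => (2 * f x)⁻¹ • gg x with hgf
  have hgf0 : gf 0 = 0 := by rw [hgf]; simp only; rw [hgg0, smul_zero]
  have hgfinner : ∀ x h : (PiLp 2 fun i => EuclideanSpace ℝ (Fin (n i))), (⟪gf x, h⟫ : ℝ) = (2 * f x)⁻¹ * ⟪gg x, h⟫ := by
    intro x h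
    rw [hgf]
    simp only
    rw [real_inner_smul_left]
  -- gradient existence
  have hgrad : ∀ x : (PiLp 2 fun i => EuclideanSpace ℝ (Fin (n i))), HasGradientAt f (gf x) x := by
    intro x
    rcases eq_or_ne x 0 with rfl | hx0
    · rw [hgf0]
      obtain ⟨C, hC0, hC⟩ := hMnorm.exists_upper
      rw [hasGradientAt_iff_hasFDerivAt, map_zero]
      rw [hasFDerivAt_iff_isLittleO_nhds_zero]
      rw [Asymptotics.isLittleO_iff]
      intro c hc
      rw [Metric.eventually_nhds_iff]
      refine ⟨c / (C ^ 2 + 1), by positivity, fun {y} hy => ?_⟩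
      rw [dist_zero_right] at hy
      have hfy : f (0 + y) - f 0 - (0 : (PiLp 2 fun i => EuclideanSpace ℝ (Fin (n i))) →L[ℝ] ℝ) y = f y := by
        rw [zero_add, hf0]
        simp
      rw [hfy]
      have h1 : f y ≤ C ^ 2 * ‖y‖ ^ 2 := by
        rw [hMsq]
        have := hC y
        nlinarith [Real.sqrt_nonneg (No (v y)), norm_nonneg y, hMnorm.1 y]
      rw [Real.norm_eq_abs, abs_of_nonneg (hfnn y)]
      have h3 : C ^ 2 * ‖y‖ ≤ C ^ 2 * (c / (C ^ 2 + 1)) :=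
        mul_le_mul_of_nonneg_left hy.le (by positivity)
      have h4 : C ^ 2 * (c / (C ^ 2 + 1)) ≤ c := by
        have h0 : (0:ℝ) < C ^ 2 + 1 := by positivity
        rw [mul_comm, div_mul_eq_mul_div, div_le_iff₀ h0]
        nlinarith [hc.le]
      nlinarith [norm_nonneg y]
    · have hNovx : 0 < No (v x) := by
        rcases eq_or_lt_of_le (hNo.1 (v x)) with h | h
        · exact absurd (hvx0 x h.symm) hx0
        · exact h
      have hFvx : F (v x) = No (v x) ^ 2 := hF _
      have hFpos : 0 < F (v x) := by rw [hFvx]; positivity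
      have hsq := Real.hasDerivAt_sqrt hFpos.ne'
      have hcomp := hsq.comp_hasFDerivAt x (hggrad x).hasFDerivAt
      have hfe : f = fun y : (PiLp 2 fun i => EuclideanSpace ℝ (Fin (n i))) => Real.sqrt (F (v y)) := by
        funext y; exact hf y
      have heq2 : (1 / (2 * Real.sqrt (F (v x)))) • InnerProductSpace.toDual ℝ (PiLp 2 fun i => EuclideanSpace ℝ (Fin (n i))) (gg x)
          = InnerProductSpace.toDual ℝ (PiLp 2 fun i => EuclideanSpace ℝ (Fin (n i))) (gf x) := by
        have hsf : Real.sqrt (F (v x)) = f x := (hf x).symm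
        rw [hgf]
        simp only [_root_.map_smul]
        rw [hsf, one_div]
      rw [heq2] at hcomp
      rw [hfe]
      exact hasGradientAt_iff_hasFDerivAt.mpr hcomp
  refine ⟨gf, hgrad, ?_⟩
  -- the inequality
  intro x h
  by_cases hW0 : No (v h) = 0
  · have hh0 : h = 0 := hvx0 h hW0
    rw [hh0, add_zero, inner_zero_right, hf0]
    simp
  · have hWpos : 0 < No (v h) := lt_of_le_of_ne (hNo.1 _) (Ne.symm hW0)
    -- L ≥ 2
    have hL2 : 2 ≤ L := by
      set y0 : EuclideanSpace ℝ (Fin K) := (No (v h))⁻¹ • v h with hy0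
      have hNy0 : No y0 = 1 := by
        rw [hy0, hNo.2.2.1, abs_of_pos (inv_pos.mpr hWpos), inv_mul_cancel₀ hW0]
      have heuler := grad_sq_euler hNo hF (hgF y0)
      rw [hNy0] at heuler
      have hpair := hNo.pairing (gF y0) y0
      rw [hNy0, mul_one] at hpair
      have hlip := hgFlip y0 0
      rw [hgF0, sub_zero, sub_zero, hNy0, mul_one] at hlip
      nlinarith
    have hfh : f h = No (v h) := hfeq h
    rcases eq_or_ne x 0 with rfl | hx0
    · rw [zero_add, hf0, hgf0, inner_zero_left]
      have := hfnn h
      nlinarith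
    · have hNovx : 0 < No (v x) := by
        rcases eq_or_lt_of_le (hNo.1 (v x)) with h' | h'
        · exact absurd (hvx0 x h'.symm) hx0
        · exact h'
      set a := No (v x) with ha
      set Wn := No (v h) with hWn
      set d' : EuclideanSpace ℝ (Fin K) := WithLp.toLp 2 (fun i => ⟪gφ i (x i), h i⟫) with hd'
      set Dn := No d' with hDn
      set S := No (v x + d') with hS
      set b := (⟪gf x, h⟫ : ℝ) with hb
      -- step 2
      have step2 : No (v (x + h)) ≤ S + ℓ / 2 * Wn := by
        have hpt : ∀ i, |v (x + h) i| ≤ |(v x + d' + (ℓ / 2) • v h) i| := by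
          intro i
          have hadd : (x + h) i = x i + h i := rfl
          have h1 : v (x + h) i = φ i (x i + h i) := by rw [hv]; simp only [hadd]
          have hdesc := descent_lemma (hNi i) (hgφ i) hℓ (hgφlip i) (x i) (h i)
          have hni : Ni i (h i) ^ 2 = v h i := by rw [hv]; simp only; rw [hφ]
          rw [hni] at hdesc
          have hcomp : (v x + d' + (ℓ / 2) • v h) i = v x i + d' i + ℓ / 2 * v h i := by
            simp only [PiLp.add_apply, PiLp.smul_apply, Pi.add_apply, Pi.smul_apply,
              smul_eq_mul]
          have hvxi : v x i = φ i (x i) := by rw [hv]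
          have hd'i : d' i = ⟪gφ i (x i), h i⟫ := by rw [hd']
          rw [h1, hcomp, abs_of_nonneg (by rw [hφ]; positivity)]
          refine le_trans ?_ (le_abs_self _)
          rw [hvxi, hd'i]
          linarith
        have hmono := absnorm_mono hNo hNoabs hpt
        have htri : No (v x + d' + (ℓ / 2) • v h) ≤ No (v x + d') + ℓ / 2 * No (v h) := by
          refine (hNo.2.2.2 _ _).trans ?_
          rw [hNo.2.2.1, abs_of_nonneg (by linarith : (0:ℝ) ≤ ℓ / 2)]
        exact hmono.trans htri
      -- step 3 + 5
      have hdescF := descent_lemma hNo hgF hL hgFlip (v x) d'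
      have hFS : F (v x + d') = S ^ 2 := by rw [hF, hS]
      have hFa : F (v x) = a ^ 2 := by rw [hF, ha]
      have hinner2 : (⟪gF (v x), d'⟫ : ℝ) = 2 * a * b := by
        have h1 : (⟪gg x, h⟫ : ℝ) = ⟪gF (v x), d'⟫ := hinner x h
        have h2 : b = (2 * a)⁻¹ * ⟪gF (v x), d'⟫ := by
          rw [hb, hgfinner, h1, hfeq x, ha]
        rw [h2]
        field_simp
      have step3 : S ^ 2 ≤ a ^ 2 + 2 * a * b + L / 2 * Dn ^ 2 := by
        rw [← hFS, ← hFa, ← hinner2, hDn]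
        exact hdescF
      -- step 4
      have step4 : Dn ≤ 2 * Real.sqrt (a * Wn) := by
        have hpt : ∀ i, |d' i| ≤ |((2:ℝ) • (WithLp.toLp 2 (fun j => Real.sqrt (v x j * v h j)) :
            EuclideanSpace ℝ (Fin K))) i| := by
          intro i
          have h1 : d' i = ⟪gφ i (x i), h i⟫ := by rw [hd']
          have h2 := hblock i (x i) (h i)
          have h3 : φ i (x i) = v x i := by rw [hv]
          have h4 : φ i (h i) = v h i := by rw [hv]
          rw [h3, h4] at h2
          have hcomp : ((2:ℝ) • (WithLp.toLp 2 (fun j => Real.sqrt (v x j * v h j)) :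
              EuclideanSpace ℝ (Fin K))) i = 2 * Real.sqrt (v x i * v h i) := by
            simp only [PiLp.smul_apply, Pi.smul_apply, smul_eq_mul, PiLp.toLp_apply]
          rw [h1, hcomp,
            abs_of_nonneg (show (0:ℝ) ≤ 2 * Real.sqrt (v x i * v h i) by positivity)]
          exact h2
        have hmono := absnorm_mono hNo hNoabs hpt
        have hhom : No ((2:ℝ) • (WithLp.toLp 2 (fun j => Real.sqrt (v x j * v h j)) :
            EuclideanSpace ℝ (Fin K))) = 2 * No (WithLp.toLp 2 (fun j => Real.sqrt (v x j * v h j)) :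
            EuclideanSpace ℝ (Fin K)) := by
          rw [hNo.2.2.1]; norm_num
        have hcs := absnorm_cs hNo hNoabs (fun i => hvnn x i) (fun i => hvnn h i)
        rw [hDn]
        calc No d' ≤ 2 * No (WithLp.toLp 2 (fun j => Real.sqrt (v x j * v h j)) :
              EuclideanSpace ℝ (Fin K)) := by rw [← hhom]; exact hmono
          _ ≤ 2 * Real.sqrt (a * Wn) := by
              rw [ha, hWn]
              nlinarith [hcs]
      -- |b| ≤ Dn
      have hbbound : |b| ≤ Dn := by
        have h1 := grad_pair_le hNo hF (hgF (v x)) d'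
        have h2 := grad_pair_le hNo hF (hgF (v x)) (-d')
        rw [inner_neg_right] at h2
        rw [hNo.neg] at h2
        rw [hinner2] at h1 h2
        rw [← ha, ← hDn] at h1 h2
        have hDnn : 0 ≤ Dn := hNo.1 _
        rw [abs_le]
        constructor
        · nlinarith only [h1, h2, hNovx, hDnn]
        · nlinarith only [h1, h2, hNovx, hDnn]
      -- finish
      have hamgm : Real.sqrt (a * Wn) ≤ (a + Wn) / 2 := am_gm hNovx.le hWpos.le
      have hsqab : Real.sqrt (a * Wn) ^ 2 = a * Wn :=
        Real.sq_sqrt (by positivity)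
      have hDnn : 0 ≤ Dn := hNo.1 _
      have hSnn : 0 ≤ S := hNo.1 _
      have hbge : -b ≤ a + Wn := by
        have h1 := (abs_le.mp hbbound).1
        linarith only [h1, step4, hamgm]
      have hRnn : 0 ≤ a + b + L * Wn := by
        have hw : 0 ≤ (L - 1) * Wn := mul_nonneg (by linarith only [hL2]) hWpos.le
        linarith only [hbge, hw]
      have hSle : S ≤ a + b + L * Wn := by
        have hD2 : Dn ^ 2 ≤ 4 * (a * Wn) := by
          nlinarith only [step4, hsqab, hDnn, Real.sqrt_nonneg (a * Wn)]
        have h5 : L / 2 * Dn ^ 2 ≤ 2 * L * (a * Wn) := by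
          have := mul_le_mul_of_nonneg_left hD2 (show (0:ℝ) ≤ L / 2 by linarith only [hL])
          linarith only [this]
        have hS2 : S ^ 2 ≤ (a + b + L * Wn) ^ 2 := by
          nlinarith only [step3, h5, sq_nonneg (b + L * Wn)]
        have := Real.sqrt_le_sqrt hS2
        rw [Real.sqrt_sq hSnn, Real.sqrt_sq hRnn] at this
        exact this
      have hfxh : f (x + h) = No (v (x + h)) := hfeq (x + h)
      have hfx : f x = a := hfeq x
      rw [hfxh, hfx, hfh]
      linarith only [step2, hSle, hWpos.le, hℓ]
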